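/- Let G = ((V,E), v_in, AP, L) be a labeled graph that is controllably recurrent and let 0 ≤ m ≤ |AP|. Then there exists a path ω from v_in with |L(ω)| ≥ m if and only if |⋃{L(v) : v reachable from v_in}| ≥ m. -/

import Mathlib

/-- A path in a labeled graph: an infinite sequence of vertices starting at `v0`
and following the edge relation `E`. -/
def IsPath {V : Type*} (E : V → V → Prop) (v0 : V) (ω : ℕ → V) : Prop :=
  ω 0 = v0 ∧ ∀ i, E (ω i) (ω (i + 1))

/-- A finite walk from `a` to `b`. -/
def FinWalk {V : Type*} (E : V → V → Prop) (a b : V) (n : ℕ) (f : ℕ → V) : Prop :=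
  f 0 = a ∧ f n = b ∧ ∀ i < n, E (f i) (f (i + 1))

lemma finwalk_of_rtg {V : Type*} {E : V → V → Prop} {a b : V}
    (h : Relation.ReflTransGen E a b) : ∃ n f, FinWalk E a b n f := by
  induction h with
  | refl => exact ⟨0, fun _ => a, rfl, rfl, fun i hi => absurd hi (Nat.not_lt_zero i)⟩
  | @tail b c _ hbc ih =>
    obtain ⟨n, f, h0, hn, hedge⟩ := ih
    refine ⟨n + 1, fun i => if i ≤ n then f i else c, ?_, ?_, ?_⟩
    · show (if 0 ≤ n then f 0 else c) = a
      rw [if_pos (Nat.zero_le n)]; exact h0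
    · show (if n + 1 ≤ n then f (n + 1) else c) = c
      rw [if_neg (by omega)]
    · intro i hi
      show E (if i ≤ n then f i else c) (if i + 1 ≤ n then f (i + 1) else c)
      rcases Nat.lt_or_ge i n with h' | h'
      · rw [if_pos (Nat.le_of_lt h'), if_pos (Nat.succ_le_of_lt h')]
        exact hedge i h'
      · have : i = n := Nat.le_antisymm (Nat.lt_succ_iff.mp hi) h'
        subst this
        rw [if_pos (le_refl i), if_neg (by omega), hn]
        exact hbc

lemma finwalk_comp {V : Type*} {E : V → V → Prop} {a b c : V} {n m : ℕ} {f g : ℕ → V}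
    (hf : FinWalk E a b n f) (hg : FinWalk E b c m g) :
    FinWalk E a c (n + m) (fun i => if i < n then f i else g (i - n)) := by
  obtain ⟨hf0, hfn, hfe⟩ := hf
  obtain ⟨hg0, hgm, hge⟩ := hg
  refine ⟨?_, ?_, ?_⟩
  · show (if 0 < n then f 0 else g (0 - n)) = a
    rcases Nat.eq_zero_or_pos n with h | h
    · subst h; rw [if_neg (by omega)]
      simpa [hg0, ← hf0] using hfn.symm
    · rw [if_pos h]; exact hf0
  · show (if n + m < n then f (n + m) else g (n + m - n)) = c
    rw [if_neg (by omega)]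
    simpa using hgm
  · intro i hi
    show E (if i < n then f i else g (i - n)) (if i + 1 < n then f (i + 1) else g (i + 1 - n))
    rcases Nat.lt_or_ge i n with h' | h'
    · rcases Nat.lt_or_ge (i + 1) n with h'' | h''
      · rw [if_pos h', if_pos h'']; exact hfe i h'
      · have he : i + 1 = n := by omega
        rw [if_pos h', if_neg (by omega)]
        have : g (i + 1 - n) = f (i + 1) := by
          rw [he]; simp [hg0, hfn]
        rw [this]; exact hfe i h'
    · rw [if_neg (by omega), if_neg (by omega)]
      have h1 : i + 1 - n = (i - n) + 1 := by omega
      rw [h1]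
      exact hge (i - n) (by omega)

/-- There is a closed walk at `vin`, of positive length, visiting every
reachable vertex from a given list. -/
lemma closed_walk_cover {V : Type*} {E : V → V → Prop} (hE : ∀ v, ∃ u, E v u) (vin : V)
    (hcr : ∀ u, Relation.ReflTransGen E vin u → Relation.ReflTransGen E u vin)
    (lst : List V) :
    ∃ n f, 1 ≤ n ∧ FinWalk E vin vin n f ∧
      ∀ u ∈ lst, Relation.ReflTransGen E vin u → ∃ j ≤ n, f j = u := by
  induction lst with
  | nil =>
    obtain ⟨u, hu⟩ := hE vin
    have hru : Relation.ReflTransGen E vin u := Relation.ReflTransGen.single hu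
    obtain ⟨k, g, hg⟩ := finwalk_of_rtg (hcr u hru)
    have h1 : FinWalk E vin u 1 (fun i => if i < 1 then vin else u) := by
      refine ⟨by norm_num, by norm_num, ?_⟩
      intro i hi
      interval_cases i
      simpa using hu
    exact ⟨1 + k, _, by omega, finwalk_comp h1 hg, fun u hu => absurd hu List.not_mem_nil⟩
  | cons v rest ih =>
    obtain ⟨n, f, hn1, hf, hcov⟩ := ih
    by_cases hv : Relation.ReflTransGen E vin v
    · obtain ⟨k1, g1, hg1⟩ := finwalk_of_rtg hv
      obtain ⟨k2, g2, hg2⟩ := finwalk_of_rtg (hcr v hv)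
      have hloop := finwalk_comp (finwalk_comp hg1 hg2) hf
      refine ⟨k1 + k2 + n, _, by omega, hloop, ?_⟩
      intro u hu hru
      rcases List.mem_cons.mp hu with h | h
      · subst h
        refine ⟨k1, by omega, ?_⟩
        show (if k1 < k1 + k2 then
            (if k1 < k1 then g1 k1 else g2 (k1 - k1)) else f (k1 - (k1 + k2))) = u
        rcases Nat.eq_zero_or_pos k2 with hk2 | hk2
        · rw [if_neg (by omega)]
          have h0 : k1 - (k1 + k2) = 0 := by omega
          rw [h0, hf.1, ← hg2.2.1, hk2, hg2.1]
        · rw [if_pos (by omega), if_neg (by omega), Nat.sub_self, hg2.1]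
      · obtain ⟨j, hj, hfj⟩ := hcov u h hru
        refine ⟨k1 + k2 + j, by omega, ?_⟩
        show (if k1 + k2 + j < k1 + k2 then
            (if k1 + k2 + j < k1 then g1 (k1 + k2 + j) else g2 (k1 + k2 + j - k1))
            else f (k1 + k2 + j - (k1 + k2))) = u
        rw [if_neg (by omega)]
        have h0 : k1 + k2 + j - (k1 + k2) = j := by omega
        rw [h0, hfj]
    · exact ⟨n, f, hn1, hf, fun u hu hru => by
        rcases List.mem_cons.mp hu with h | h
        · exact absurd (h ▸ hru) hv
        · exact hcov u h hru⟩

theorem controllably_recurrent_maximal_coverage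
    {V AP : Type*} [Fintype V] [Fintype AP]
    (E : V → V → Prop) (hE : ∀ v, ∃ u, E v u)
    (vin : V) (L : V → Set AP)
    (hcr : ∀ u, Relation.ReflTransGen E vin u → Relation.ReflTransGen E u vin)
    (m : ℕ) (hm : m ≤ Fintype.card AP) :
    (∃ ω : ℕ → V, IsPath E vin ω ∧ m ≤ (⋃ i : ℕ, L (ω i)).ncard) ↔
      m ≤ (⋃ u ∈ {u | Relation.ReflTransGen E vin u}, L u).ncard := by
  constructor
  · rintro ⟨ω, ⟨hω0, hωe⟩, hcard⟩
    have hreach : ∀ i, Relation.ReflTransGen E vin (ω i) := by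
      intro i
      induction i with
      | zero => rw [hω0]
      | succ k ih => exact ih.tail (hωe k)
    have hsub : (⋃ i : ℕ, L (ω i)) ⊆ ⋃ u ∈ {u | Relation.ReflTransGen E vin u}, L u := by
      intro x hx
      obtain ⟨s, ⟨i, rfl⟩, hxs⟩ := hx
      exact Set.mem_biUnion (hreach i) hxs
    exact le_trans hcard (Set.ncard_le_ncard hsub (Set.toFinite _))
  · intro hcard
    obtain ⟨n, f, hn1, ⟨hf0, hfn, hfe⟩, hcov⟩ :=
      closed_walk_cover hE vin hcr (Finset.univ.toList (α := V))
    refine ⟨fun i => f (i % n), ⟨?_, ?_⟩, ?_⟩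
    · show f (0 % n) = vin
      rw [Nat.zero_mod, hf0]
    · intro i
      show E (f (i % n)) (f ((i + 1) % n))
      set j := i % n with hj
      have hjn : j < n := Nat.mod_lt i hn1
      have hstep : (i + 1) % n = (j + 1) % n := by
        conv_lhs => rw [Nat.add_mod, ← hj]
        rw [Nat.add_mod j 1 n, Nat.mod_eq_of_lt hjn]
      rcases Nat.lt_or_ge (j + 1) n with h | h
      · rw [hstep, Nat.mod_eq_of_lt h]
        exact hfe j hjn
      · have hjn' : j + 1 = n := by omega
        rw [hstep, hjn', Nat.mod_self]
        have : f 0 = f (j + 1) := by rw [hjn', hfn, hf0]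
        rw [this]
        exact hfe j hjn
    · refine le_trans hcard (Set.ncard_le_ncard ?_ (Set.toFinite _))
      intro x hx
      obtain ⟨s, ⟨u, rfl⟩, hxs⟩ := hx
      simp only [Set.mem_iUnion, Set.mem_setOf_eq] at hxs
      obtain ⟨hru, hxu⟩ := hxs
      obtain ⟨j, hjn, hfj⟩ := hcov u (Finset.mem_toList.mpr (Finset.mem_univ u)) hru
      refine Set.mem_iUnion.mpr ⟨j % n, ?_⟩
      show x ∈ L (f (j % n % n))
      rw [Nat.mod_mod_of_dvd j dvd_rfl]
      rcases Nat.lt_or_ge j n with h | h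
      · rw [Nat.mod_eq_of_lt h, hfj]; exact hxu
      · have : j = n := by omega
        rw [this, Nat.mod_self, hf0, ← hfn, ← this, hfj]
        exact hxu
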